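/- arXiv:1708.03785 — 9 statements merged into one kernel-verified Lean document; each statement's English description precedes it below -/
import Mathlib

section
/- The set of primes in [1,n] is a maximum (n,1)-shelf: the family A = {p ∈ ℕ : p prime, p ≤ n} ∪ {1} satisfies that for every prime p, the number of elements of A divisible by p is at most 1, and A has the largest cardinality among all subsets B of {1,...,n} with this property. -/
/-- The set of primes in `[1,n]` together with `1` is a maximum `(n,1)`-shelf. -/
theorem primes_maximum_shelf_one (n : ℕ) (hn : 1 ≤ n) :
    let A : Finset ℕ := ((Finset.Icc 1 n).filter (fun p => p.Prime)) ∪ {1}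
    A ⊆ Finset.Icc 1 n ∧
    (∀ p : ℕ, p.Prime → (A.filter (fun a => p ∣ a)).card ≤ 1) ∧
    (∀ B : Finset ℕ, B ⊆ Finset.Icc 1 n →
      (∀ p : ℕ, p.Prime → (B.filter (fun a => p ∣ a)).card ≤ 1) →
      B.card ≤ A.card) := by
  intro A
  have hA1 : A ⊆ Finset.Icc 1 n := by
    intro a ha
    simp only [A, Finset.mem_union, Finset.mem_filter, Finset.mem_singleton] at ha
    rcases ha with ⟨h, _⟩ | rfl
    · exact h
    · simp [Finset.mem_Icc, hn]
  refine ⟨hA1, ?_, ?_⟩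
  · intro p hp
    refine Finset.card_le_one.mpr ?_
    intro a ha b hb
    simp only [A, Finset.mem_filter, Finset.mem_union, Finset.mem_singleton] at ha hb
    obtain ⟨ha1, hpa⟩ := ha
    obtain ⟨hb1, hpb⟩ := hb
    have key : ∀ x, ((x ∈ Finset.Icc 1 n ∧ x.Prime) ∨ x = 1) → p ∣ x → x = p := by
      rintro x (⟨_, hx⟩ | rfl) hd
      · exact ((Nat.prime_dvd_prime_iff_eq hp hx).mp hd).symm
      · exact absurd (Nat.le_of_dvd one_pos hd) (not_le.mpr hp.one_lt)
    rw [key a ha1 hpa, key b hb1 hpb]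
  · intro B hB hBp
    have h1 : (B.erase 1).card ≤ ((Finset.Icc 1 n).filter (fun p => p.Prime)).card := by
      apply Finset.card_le_card_of_injOn Nat.minFac
      · intro b hb
        have hb1 : b ≠ 1 := Finset.ne_of_mem_erase hb
        have hbB : b ∈ B := Finset.mem_of_mem_erase hb
        have hbn := hB hbB
        rw [Finset.mem_Icc] at hbn
        have hprime := Nat.minFac_prime hb1
        simp only [Finset.mem_coe, Finset.mem_filter, Finset.mem_Icc]
        exact ⟨⟨hprime.one_lt.le, le_trans (Nat.minFac_le (by omega)) hbn.2⟩, hprime⟩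
      · intro a ha b hb hab
        have haB := Finset.mem_of_mem_erase ha
        have hbB := Finset.mem_of_mem_erase hb
        have ha1 := Finset.ne_of_mem_erase ha
        have hp := Nat.minFac_prime ha1
        have h := hBp a.minFac hp
        have hamem : a ∈ B.filter (fun x => a.minFac ∣ x) :=
          Finset.mem_filter.mpr ⟨haB, Nat.minFac_dvd a⟩
        have hbmem : b ∈ B.filter (fun x => a.minFac ∣ x) :=
          Finset.mem_filter.mpr ⟨hbB, hab ▸ Nat.minFac_dvd b⟩
        exact Finset.card_le_one.mp h a hamem b hbmem
    have hAcard : A.card = ((Finset.Icc 1 n).filter (fun p => p.Prime)).card + 1 := by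
      rw [Finset.card_union_of_disjoint (by simp [Finset.disjoint_singleton_right,
        Nat.not_prime_one])]
      simp
    have h2 : B ⊆ insert 1 (B.erase 1) := Finset.subset_insert_iff.mpr subset_rfl
    calc B.card ≤ (insert 1 (B.erase 1)).card := Finset.card_le_card h2
      _ ≤ (B.erase 1).card + 1 := Finset.card_insert_le _ _
      _ ≤ _ := by omega
end

section
/- For every n ∈ ℕ, the set {1} ∪ {p ∈ ℙ : p ≤ n} ∪ {p² : p ∈ ℙ, p² ≤ n} is a maximum (n,2)-shelf, i.e., it is an (n,2)-shelf of maximal cardinality. -/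
open scoped Classical

private lemma shelf_key (B : Finset ℕ)
    (hBp : ∀ p : ℕ, p.Prime → (B.filter (fun a => p ∣ a)).card ≤ 2)
    {a b : ℕ} (ha : a ∈ B) (hb : b ∈ B) (hab : a ≠ b)
    (hm : a.minFac = b.minFac)
    (hanm : ¬ ∀ x ∈ B, x.minFac = a.minFac → a ≤ x)
    (hbnm : ¬ ∀ x ∈ B, x.minFac = b.minFac → b ≤ x) : False := by
  push_neg at hanm hbnm
  obtain ⟨xa, hxaB, hxam, hxalt⟩ := hanm
  obtain ⟨xb, hxbB, hxbm, hxblt⟩ := hbnm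
  set p := a.minFac with hp
  set x : ℕ := if xb = a then xa else xb with hx
  have hxB : x ∈ B := by rw [hx]; split <;> assumption
  have hxm : x.minFac = p := by
    rw [hx]; split
    · exact hxam
    · rw [hxbm, ← hm]
  have hxa : x ≠ a := by
    rw [hx]; split
    · omega
    · assumption
  have hxb : x ≠ b := by
    rw [hx]; split
    · rename_i h; subst h; omega
    · omega
  have hpp : p.Prime := by
    have ha1 : a ≠ 1 := by
      intro h
      have hxa0 : xa = 0 := by omega
      rw [hxa0, Nat.minFac_zero] at hxam
      rw [h, Nat.minFac_one] at hp
      omega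
    exact Nat.minFac_prime ha1
  have hsub : ({x, a, b} : Finset ℕ) ⊆ B.filter (fun y => p ∣ y) := by
    intro y hy
    simp only [Finset.mem_insert, Finset.mem_singleton] at hy
    rcases hy with h | h | h <;> rw [Finset.mem_filter, h]
    · exact ⟨hxB, by rw [← hxm]; exact Nat.minFac_dvd x⟩
    · exact ⟨ha, by rw [hp]; exact Nat.minFac_dvd a⟩
    · exact ⟨hb, by rw [hm]; exact Nat.minFac_dvd b⟩
  have hcard : ({x, a, b} : Finset ℕ).card = 3 := by
    rw [Finset.card_insert_of_notMem (by simp [hxa, hxb]),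
      Finset.card_insert_of_notMem (by simp [hab]), Finset.card_singleton]
  have := Finset.card_le_card hsub
  have := hBp p hpp
  omega

/-- `{1} ∪ {p prime : p ≤ n} ∪ {p² : p prime, p² ≤ n}` is a maximum `(n,2)`-shelf. -/
theorem primes_and_squares_maximum_shelf_two (n : ℕ) (hn : 1 ≤ n) :
    let A : Finset ℕ := {1} ∪ ((Finset.Icc 1 n).filter (fun p => p.Prime)) ∪
      ((Finset.Icc 1 n).filter (fun m => ∃ p : ℕ, p.Prime ∧ m = p ^ 2))
    A ⊆ Finset.Icc 1 n ∧
    (∀ p : ℕ, p.Prime → (A.filter (fun a => p ∣ a)).card ≤ 2) ∧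
    (∀ B : Finset ℕ, B ⊆ Finset.Icc 1 n →
      (∀ p : ℕ, p.Prime → (B.filter (fun a => p ∣ a)).card ≤ 2) →
      B.card ≤ A.card) := by
  intro A
  have hmemA : ∀ m : ℕ, m ∈ A ↔
      m = 1 ∨ (1 ≤ m ∧ m ≤ n ∧ m.Prime) ∨
        (1 ≤ m ∧ m ≤ n ∧ ∃ p : ℕ, p.Prime ∧ m = p ^ 2) := by
    intro m
    simp only [A, Finset.mem_union, Finset.mem_filter, Finset.mem_singleton,
      Finset.mem_Icc]
    tauto
  refine ⟨?_, ?_, ?_⟩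
  · intro x hx
    rw [hmemA] at hx
    rw [Finset.mem_Icc]
    rcases hx with rfl | ⟨h1, h2, _⟩ | ⟨h1, h2, _⟩ <;> omega
  · intro p hp
    have hsub : A.filter (fun a => p ∣ a) ⊆ {p, p ^ 2} := by
      intro x hx
      rw [Finset.mem_filter, hmemA] at hx
      obtain ⟨hxA, hpx⟩ := hx
      simp only [Finset.mem_insert, Finset.mem_singleton]
      rcases hxA with rfl | ⟨_, _, hxp⟩ | ⟨_, _, q, hq, rfl⟩
      · exact absurd (Nat.eq_one_of_dvd_one hpx) hp.ne_one
      · left; exact ((Nat.prime_dvd_prime_iff_eq hp hxp).mp hpx).symm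
      · right
        have : p = q := (Nat.prime_dvd_prime_iff_eq hp hq).mp (hp.dvd_of_dvd_pow hpx)
        rw [this]
    calc (A.filter (fun a => p ∣ a)).card ≤ ({p, p ^ 2} : Finset ℕ).card :=
          Finset.card_le_card hsub
      _ ≤ 2 := Finset.card_insert_le _ _ |>.trans (by simp)
  · intro B hB hBp
    set f : ℕ → ℕ := fun b =>
      if b = 1 then 1
      else if ∀ x ∈ B, x.minFac = b.minFac → b ≤ x then b.minFac
      else b.minFac ^ 2 with hf
    apply Finset.card_le_card_of_injOn f
    · -- maps to A
      intro b hbB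
      have hbIcc := hB hbB
      rw [Finset.mem_Icc] at hbIcc
      rw [Finset.mem_coe, hmemA]
      by_cases hb1 : b = 1
      · left; simp [hf, hb1]
      · have hb2 : 2 ≤ b := by omega
        have hppr : b.minFac.Prime := Nat.minFac_prime hb1
        by_cases hmin : ∀ x ∈ B, x.minFac = b.minFac → b ≤ x
        · right; left
          have hfb : f b = b.minFac := by
            simp only [hf]; rw [if_neg hb1, if_pos hmin]
          rw [hfb]
          have := Nat.minFac_le (show 0 < b by omega)
          exact ⟨hppr.one_lt.le, by omega, hppr⟩
        · right; right
          have hfb : f b = b.minFac ^ 2 := by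
            simp only [hf]; rw [if_neg hb1, if_neg hmin]
          rw [hfb]
          push_neg at hmin
          obtain ⟨x, hxB, hxm, hxlt⟩ := hmin
          have hxIcc := hB hxB
          rw [Finset.mem_Icc] at hxIcc
          have hbnp : ¬ b.Prime := by
            intro hbp
            have hx1 : x ≠ 1 := by
              intro h; subst h
              rw [Nat.minFac_one] at hxm
              exact hppr.ne_one hxm.symm
            have := Nat.minFac_le (show 0 < x by omega)
            rw [hxm, hbp.minFac_eq] at this
            omega
          have hsq : b.minFac ^ 2 ≤ b := Nat.minFac_sq_le_self (by omega) hbnp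
          exact ⟨Nat.one_le_pow _ _ (Nat.minFac_pos b), by omega, b.minFac, hppr, rfl⟩
    · -- injective on B
      intro a haB b hbB hfab
      by_contra hab
      have haIcc := hB haB; have hbIcc := hB hbB
      rw [Finset.mem_Icc] at haIcc hbIcc
      simp only [hf] at hfab
      by_cases ha1 : a = 1 <;> by_cases hb1 : b = 1
      · exact hab (ha1.trans hb1.symm)
      · have hbpr := Nat.minFac_prime hb1
        rw [if_pos ha1, if_neg hb1] at hfab
        split at hfab
        · exact hbpr.ne_one hfab.symm
        · exact Nat.one_lt_pow two_ne_zero hbpr.one_lt |>.ne hfab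
      · have hapr := Nat.minFac_prime ha1
        rw [if_neg ha1, if_pos hb1] at hfab
        split at hfab
        · exact hapr.ne_one hfab
        · exact Nat.one_lt_pow two_ne_zero hapr.one_lt |>.ne' hfab
      · have hapr := Nat.minFac_prime ha1
        have hbpr := Nat.minFac_prime hb1
        rw [if_neg ha1, if_neg hb1] at hfab
        split at hfab <;> split at hfab
        · -- both minimal: a ≤ b and b ≤ a
          rename_i hma hmb
          have h1 := hma b hbB hfab.symm
          have h2 := hmb a haB hfab
          omega
        · -- minFac a = minFac b ^ 2, impossible: prime = prime²
          rename_i hma hmb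
          have hd := hapr.eq_one_or_self_of_dvd b.minFac
            (hfab ▸ dvd_pow_self b.minFac two_ne_zero)
          rcases hd with h | h
          · exact absurd h hbpr.ne_one
          · nlinarith [hbpr.two_le]
        · rename_i hma hmb
          have hd := hbpr.eq_one_or_self_of_dvd a.minFac
            (hfab ▸ dvd_pow_self a.minFac two_ne_zero)
          rcases hd with h | h
          · exact absurd h hapr.ne_one
          · nlinarith [hapr.two_le]
        · rename_i hma hmb
          have hm : a.minFac = b.minFac := Nat.pow_left_injective (by norm_num) hfab
          exact shelf_key B hBp haB hbB hab hm hma hmb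
end

section
/- Any proper superset of S = {1} ∪ {p ∈ ℙ : p ≤ n} ∪ {p² : p ∈ ℙ, p² ≤ n} contained in {1,...,n} fails to be an (n,2)-shelf: if B ⊆ {1,...,n} strictly contains S, then there is a prime p with o_p(B) ≥ 3. -/
open scoped Classical

/-- Any proper superset of `{1} ∪ {p prime : p ≤ n} ∪ {p² : p prime, p² ≤ n}`
inside `{1,…,n}` fails to be an `(n,2)`-shelf. -/
theorem proper_superset_not_shelf_two (n : ℕ) (B : Finset ℕ)
    (hB : B ⊆ Finset.Icc 1 n)
    (hsub : ({1} ∪ ((Finset.Icc 1 n).filter (fun p => p.Prime)) ∪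
      ((Finset.Icc 1 n).filter (fun m => ∃ p : ℕ, p.Prime ∧ m = p ^ 2))) ⊂ B) :
    ∃ p : ℕ, p.Prime ∧ 3 ≤ (B.filter (fun a => p ∣ a)).card := by
  set S := ({1} ∪ ((Finset.Icc 1 n).filter (fun p => p.Prime)) ∪
      ((Finset.Icc 1 n).filter (fun m => ∃ p : ℕ, p.Prime ∧ m = p ^ 2))) with hS
  obtain ⟨b, hbB, hbS⟩ := Finset.exists_of_ssubset hsub
  have hbIcc := hB hbB
  simp only [hS, Finset.mem_union, Finset.mem_filter, Finset.mem_singleton, not_or,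
    not_and] at hbS
  obtain ⟨⟨hb1, hbp⟩, hbsq⟩ := hbS
  have hbp' : ¬ b.Prime := fun h => hbp hbIcc h
  have hbsq' : ¬ ∃ p : ℕ, p.Prime ∧ b = p ^ 2 := fun h => hbsq hbIcc h
  have hb2 : 2 ≤ b := by
    rcases Finset.mem_Icc.mp hbIcc with ⟨h1, _⟩
    omega
  set p := b.minFac with hp
  have hpp : p.Prime := Nat.minFac_prime (by omega)
  have hpd : p ∣ b := Nat.minFac_dvd b
  have hsq : p ^ 2 ≤ b := Nat.minFac_sq_le_self (by omega) hbp'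
  have hne : b ≠ p ^ 2 := fun h => hbsq' ⟨p, hpp, h⟩
  have hsq' : p ^ 2 < b := lt_of_le_of_ne hsq (Ne.symm hne)
  have hbn : b ≤ n := (Finset.mem_Icc.mp hbIcc).2
  have hpB : p ∈ B := by
    apply hsub.subset
    simp only [hS, Finset.mem_union, Finset.mem_filter, Finset.mem_Icc]
    left; right
    exact ⟨⟨hpp.one_lt.le, le_trans (le_trans (Nat.le_self_pow two_ne_zero p) hsq) hbn⟩, hpp⟩
  have hp2B : p ^ 2 ∈ B := by
    apply hsub.subset
    simp only [hS, Finset.mem_union, Finset.mem_filter, Finset.mem_Icc]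
    right
    exact ⟨⟨one_le_pow_of_one_le' hpp.one_lt.le 2, le_trans hsq hbn⟩, p, hpp, rfl⟩
  refine ⟨p, hpp, ?_⟩
  have hsub3 : ({p, p ^ 2, b} : Finset ℕ) ⊆ B.filter (fun a => p ∣ a) := by
    intro x hx
    simp only [Finset.mem_insert, Finset.mem_singleton] at hx
    rcases hx with rfl | rfl | rfl <;> simp [Finset.mem_filter, hpB, hp2B, hbB, hpd, dvd_pow_self p two_ne_zero]
  have hcard : ({p, p ^ 2, b} : Finset ℕ).card = 3 := by
    have h1 : p < p ^ 2 := by nlinarith [hpp.one_lt]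
    rw [Finset.card_insert_of_notMem, Finset.card_insert_of_notMem, Finset.card_singleton] <;>
      simp <;> omega
  calc 3 = ({p, p ^ 2, b} : Finset ℕ).card := hcard.symm
    _ ≤ _ := Finset.card_le_card hsub3
end

section
/- For every m ≥ 9, the number 6 is not contained in any maximum (m,2)-shelf: if A ⊆ {1,...,m} satisfies o_p(A) ≤ 2 for all primes p, has maximal cardinality among such sets, then 6 ∉ A. -/
/-- For `m ≥ 9`, the number `6` belongs to no maximum `(m,2)`-shelf. -/
theorem six_not_in_maximum_shelf_two (m : ℕ) (hm : 9 ≤ m) (A : Finset ℕ)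
    (hA : A ⊆ Finset.Icc 1 m)
    (hshelf : ∀ p : ℕ, p.Prime → (A.filter (fun a => p ∣ a)).card ≤ 2)
    (hmax : ∀ B : Finset ℕ, B ⊆ Finset.Icc 1 m →
      (∀ p : ℕ, p.Prime → (B.filter (fun a => p ∣ a)).card ≤ 2) →
      B.card ≤ A.card) :
    6 ∉ A := by
  intro h6
  -- not both 2 and 4 are in A
  have h24 : ¬(2 ∈ A ∧ 4 ∈ A) := by
    rintro ⟨h2, h4⟩
    have hsub : ({2, 4, 6} : Finset ℕ) ⊆ A.filter (fun a => 2 ∣ a) := by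
      intro a ha
      simp only [Finset.mem_insert, Finset.mem_singleton] at ha
      rcases ha with rfl | rfl | rfl <;> exact Finset.mem_filter.mpr ⟨by assumption, by norm_num⟩
    have hc := Finset.card_le_card hsub
    have hc3 : ({2, 4, 6} : Finset ℕ).card = 3 := by decide
    have := hshelf 2 Nat.prime_two
    omega
  -- not both 3 and 9 are in A
  have h39 : ¬(3 ∈ A ∧ 9 ∈ A) := by
    rintro ⟨h3, h9⟩
    have hsub : ({3, 6, 9} : Finset ℕ) ⊆ A.filter (fun a => 3 ∣ a) := by
      intro a ha
      simp only [Finset.mem_insert, Finset.mem_singleton] at ha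
      rcases ha with rfl | rfl | rfl <;> exact Finset.mem_filter.mpr ⟨by assumption, by norm_num⟩
    have hc := Finset.card_le_card hsub
    have hc3 : ({3, 6, 9} : Finset ℕ).card = 3 := by decide
    have := hshelf 3 Nat.prime_three
    omega
  obtain ⟨x, hx24, hxA⟩ : ∃ x, (x = 2 ∨ x = 4) ∧ x ∉ A := by
    by_cases h2 : 2 ∈ A
    · exact ⟨4, Or.inr rfl, fun h4 => h24 ⟨h2, h4⟩⟩
    · exact ⟨2, Or.inl rfl, h2⟩
  obtain ⟨y, hy39, hyA⟩ : ∃ y, (y = 3 ∨ y = 9) ∧ y ∉ A := by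
    by_cases h3 : 3 ∈ A
    · exact ⟨9, Or.inr rfl, fun h9 => h39 ⟨h3, h9⟩⟩
    · exact ⟨3, Or.inl rfl, h3⟩
  have hx2 : 2 ∣ x := by rcases hx24 with rfl | rfl <;> norm_num
  have hy3 : 3 ∣ y := by rcases hy39 with rfl | rfl <;> norm_num
  have hxy : x ≠ y := by rcases hx24 with rfl | rfl <;> rcases hy39 with rfl | rfl <;> omega
  have hny2 : ¬ (2 ∣ y) := by rcases hy39 with rfl | rfl <;> norm_num
  have hnx3 : ¬ (3 ∣ x) := by rcases hx24 with rfl | rfl <;> norm_num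
  set B : Finset ℕ := insert x (insert y (A.erase 6)) with hB
  have hBsub : B ⊆ Finset.Icc 1 m := by
    intro a ha
    simp only [hB, Finset.mem_insert, Finset.mem_erase] at ha
    rcases ha with rfl | rfl | ⟨-, haA⟩
    · rcases hx24 with rfl | rfl <;> simp [Finset.mem_Icc] <;> omega
    · rcases hy39 with rfl | rfl <;> simp [Finset.mem_Icc] <;> omega
    · exact hA haA
  have h6f2 : 6 ∈ A.filter (fun a => 2 ∣ a) := Finset.mem_filter.mpr ⟨h6, by norm_num⟩
  have h6f3 : 6 ∈ A.filter (fun a => 3 ∣ a) := Finset.mem_filter.mpr ⟨h6, by norm_num⟩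
  have hBshelf : ∀ p : ℕ, p.Prime → (B.filter (fun a => p ∣ a)).card ≤ 2 := by
    intro p hp
    by_cases hp2 : p = 2
    · subst hp2
      have : B.filter (fun a => 2 ∣ a) = insert x ((A.filter (fun a => 2 ∣ a)).erase 6) := by
        rw [hB, Finset.filter_insert, if_pos hx2, Finset.filter_insert, if_neg hny2,
          Finset.filter_erase]
      rw [this]
      have h1 := Finset.card_insert_le x ((A.filter (fun a => 2 ∣ a)).erase 6)
      have h2 := Finset.card_erase_of_mem h6f2
      have h3 := hshelf 2 Nat.prime_two
      have h4 : 1 ≤ (A.filter (fun a => 2 ∣ a)).card := Finset.card_pos.mpr ⟨6, h6f2⟩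
      omega
    by_cases hp3 : p = 3
    · subst hp3
      have hnpx : ¬ (3 ∣ x) := hnx3
      have : B.filter (fun a => 3 ∣ a) = insert y ((A.filter (fun a => 3 ∣ a)).erase 6) := by
        rw [hB, Finset.filter_insert, if_neg hnpx, Finset.filter_insert, if_pos hy3,
          Finset.filter_erase]
      rw [this]
      have h1 := Finset.card_insert_le y ((A.filter (fun a => 3 ∣ a)).erase 6)
      have h2 := Finset.card_erase_of_mem h6f3
      have h3 := hshelf 3 Nat.prime_three
      have h4 : 1 ≤ (A.filter (fun a => 3 ∣ a)).card := Finset.card_pos.mpr ⟨6, h6f3⟩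
      omega
    · -- p ≥ 5
      have hnpx : ¬ (p ∣ x) := by
        intro hd
        rcases hx24 with rfl | rfl
        · exact hp2 ((Nat.prime_dvd_prime_iff_eq hp Nat.prime_two).mp hd)
        · have : p ∣ 2 * 2 := by norm_num at hd ⊢; exact hd
          rcases (Nat.Prime.dvd_mul hp).mp this with h | h <;>
            exact hp2 ((Nat.prime_dvd_prime_iff_eq hp Nat.prime_two).mp h)
      have hnpy : ¬ (p ∣ y) := by
        intro hd
        rcases hy39 with rfl | rfl
        · exact hp3 ((Nat.prime_dvd_prime_iff_eq hp Nat.prime_three).mp hd)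
        · have : p ∣ 3 * 3 := by norm_num at hd ⊢; exact hd
          rcases (Nat.Prime.dvd_mul hp).mp this with h | h <;>
            exact hp3 ((Nat.prime_dvd_prime_iff_eq hp Nat.prime_three).mp h)
      have : B.filter (fun a => p ∣ a) = (A.filter (fun a => p ∣ a)).erase 6 := by
        rw [hB, Finset.filter_insert, if_neg hnpx, Finset.filter_insert, if_neg hnpy,
          Finset.filter_erase]
      rw [this]
      calc ((A.filter (fun a => p ∣ a)).erase 6).card
          ≤ (A.filter (fun a => p ∣ a)).card := Finset.card_le_card (Finset.erase_subset _ _)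
        _ ≤ 2 := hshelf p hp
  have hBcard : B.card = A.card + 1 := by
    have hx_not : x ∉ insert y (A.erase 6) := by
      simp only [Finset.mem_insert, Finset.mem_erase]
      push_neg
      exact ⟨hxy, fun _ => hxA⟩
    have hy_not : y ∉ A.erase 6 := fun h => hyA (Finset.mem_of_mem_erase h)
    rw [hB, Finset.card_insert_of_notMem hx_not, Finset.card_insert_of_notMem hy_not,
      Finset.card_erase_of_mem h6]
    have : 1 ≤ A.card := Finset.card_pos.mpr ⟨6, h6⟩
    omega
  have := hmax B hBsub hBshelf
  omega
end

section
/- In particular, the maximum (6,2)-shelf {1,2,3,5,6} is not a subset of any maximum (m,2)-shelf for m ≥ 9. -/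
/-- The maximum `(6,2)`-shelf `{1,2,3,5,6}` is not a subset of any maximum
`(m,2)`-shelf for `m ≥ 9`. -/
theorem shelf_not_extendable (m : ℕ) (hm : 9 ≤ m) (A : Finset ℕ)
    (hA : A ⊆ Finset.Icc 1 m)
    (hshelf : ∀ p : ℕ, p.Prime → (A.filter (fun a => p ∣ a)).card ≤ 2)
    (hmax : ∀ B : Finset ℕ, B ⊆ Finset.Icc 1 m →
      (∀ p : ℕ, p.Prime → (B.filter (fun a => p ∣ a)).card ≤ 2) →
      B.card ≤ A.card) :
    ¬ (({1, 2, 3, 5, 6} : Finset ℕ) ⊆ A) := by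
  intro hsub
  have h2 : (2:ℕ) ∈ A := hsub (by decide)
  have h3 : (3:ℕ) ∈ A := hsub (by decide)
  have h6 : (6:ℕ) ∈ A := hsub (by decide)
  -- any even element of A is 2 or 6
  have hA2 : ∀ a ∈ A, 2 ∣ a → a = 2 ∨ a = 6 := by
    intro a ha hda
    by_contra hcon
    push_neg at hcon
    have hs : ({2, 6, a} : Finset ℕ) ⊆ A.filter (fun x => 2 ∣ x) := by
      intro x hx
      simp only [Finset.mem_insert, Finset.mem_singleton] at hx
      rcases hx with rfl | rfl | rfl <;> simp [Finset.mem_filter, h2, h6, ha, hda] <;> norm_num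
    have hc := Finset.card_le_card hs
    have hcard : ({2, 6, a} : Finset ℕ).card = 3 := by
      rw [Finset.card_insert_of_notMem (by simp [hcon.1, hcon.2]; omega),
        Finset.card_insert_of_notMem (by simp [Ne.symm hcon.2]),
        Finset.card_singleton]
    have := hshelf 2 Nat.prime_two
    omega
  have hA3 : ∀ a ∈ A, 3 ∣ a → a = 3 ∨ a = 6 := by
    intro a ha hda
    by_contra hcon
    push_neg at hcon
    have hs : ({3, 6, a} : Finset ℕ) ⊆ A.filter (fun x => 3 ∣ x) := by
      intro x hx
      simp only [Finset.mem_insert, Finset.mem_singleton] at hx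
      rcases hx with rfl | rfl | rfl <;> simp [Finset.mem_filter, h3, h6, ha, hda] <;> norm_num
    have hc := Finset.card_le_card hs
    have hcard : ({3, 6, a} : Finset ℕ).card = 3 := by
      rw [Finset.card_insert_of_notMem (by simp [hcon.1, hcon.2]; omega),
        Finset.card_insert_of_notMem (by simp [Ne.symm hcon.2]),
        Finset.card_singleton]
    have := hshelf 3 Nat.prime_three
    omega
  have h4 : (4:ℕ) ∉ A := by
    intro h4
    rcases hA2 4 h4 (by norm_num) with h | h <;> omega
  have h9 : (9:ℕ) ∉ A := by
    intro h9
    rcases hA3 9 h9 (by norm_num) with h | h <;> omega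
  set B : Finset ℕ := insert 4 (insert 9 (A.erase 6)) with hB
  have hBsub : B ⊆ Finset.Icc 1 m := by
    intro x hx
    simp only [hB, Finset.mem_insert] at hx
    rcases hx with rfl | rfl | hx
    · simp [Finset.mem_Icc]; omega
    · simp [Finset.mem_Icc]; omega
    · exact hA (Finset.mem_of_mem_erase hx)
  have hBcard : B.card = A.card + 1 := by
    have h9' : (9:ℕ) ∉ A.erase 6 := fun h => h9 (Finset.mem_of_mem_erase h)
    have h4' : (4:ℕ) ∉ insert 9 (A.erase 6) := by
      simp only [Finset.mem_insert]
      rintro (h | h)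
      · omega
      · exact h4 (Finset.mem_of_mem_erase h)
    rw [hB, Finset.card_insert_of_notMem h4', Finset.card_insert_of_notMem h9',
      Finset.card_erase_of_mem h6]
    have : 1 ≤ A.card := Finset.card_pos.mpr ⟨6, h6⟩
    omega
  have hBshelf : ∀ p : ℕ, p.Prime → (B.filter (fun a => p ∣ a)).card ≤ 2 := by
    intro p hp
    by_cases hp2 : p = 2
    · subst hp2
      have hs : B.filter (fun a => 2 ∣ a) ⊆ {2, 4} := by
        intro x hx
        simp only [Finset.mem_filter, hB, Finset.mem_insert] at hx
        obtain ⟨rfl | rfl | hx, hd⟩ := hx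
        · simp
        · omega
        · rcases hA2 x (Finset.mem_of_mem_erase hx) hd with rfl | rfl
          · simp
          · exact absurd rfl (Finset.ne_of_mem_erase hx)
      calc (B.filter (fun a => 2 ∣ a)).card ≤ ({2,4} : Finset ℕ).card :=
            Finset.card_le_card hs
        _ ≤ 2 := by decide
    by_cases hp3 : p = 3
    · subst hp3
      have hs : B.filter (fun a => 3 ∣ a) ⊆ {3, 9} := by
        intro x hx
        simp only [Finset.mem_filter, hB, Finset.mem_insert] at hx
        obtain ⟨rfl | rfl | hx, hd⟩ := hx
        · omega
        · simp
        · rcases hA3 x (Finset.mem_of_mem_erase hx) hd with rfl | rfl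
          · simp
          · exact absurd rfl (Finset.ne_of_mem_erase hx)
      calc (B.filter (fun a => 3 ∣ a)).card ≤ ({3,9} : Finset ℕ).card :=
            Finset.card_le_card hs
        _ ≤ 2 := by decide
    · have hs : B.filter (fun a => p ∣ a) ⊆ A.filter (fun a => p ∣ a) := by
        intro x hx
        simp only [Finset.mem_filter, hB, Finset.mem_insert] at hx
        obtain ⟨rfl | rfl | hx, hd⟩ := hx
        · exact absurd ((Nat.prime_dvd_prime_iff_eq hp Nat.prime_two).mp
            (hp.dvd_of_dvd_pow (show p ∣ 2 ^ 2 from hd))) hp2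
        · exact absurd ((Nat.prime_dvd_prime_iff_eq hp Nat.prime_three).mp
            (hp.dvd_of_dvd_pow (show p ∣ 3 ^ 2 from hd))) hp3
        · exact Finset.mem_filter.mpr ⟨Finset.mem_of_mem_erase hx, hd⟩
      exact le_trans (Finset.card_le_card hs) (hshelf p hp)
  have := hmax B hBsub hBshelf
  omega
end

section
/- If A is a maximum (n,k)-shelf and p is a prime with p ≤ n, then o_p(A) ≥ min(k, ⌊log_p n⌋); in particular, if o_p(A) < min(k, ⌊log_p n⌋), then A ∪ {p^j} is a strictly larger (n,k)-shelf for some j with p^j ≤ n and p^j ∉ A. -/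
/-- A maximum `(n,k)`-shelf contains at least `min k ⌊log_p n⌋` multiples of each
prime `p ≤ n`; in particular otherwise some power `p^j` could be added. -/
theorem maximum_shelf_prime_multiplicity (k n : ℕ) (A : Finset ℕ)
    (hA : A ⊆ Finset.Icc 1 n)
    (hshelf : ∀ p : ℕ, p.Prime → (A.filter (fun a => p ∣ a)).card ≤ k)
    (hmax : ∀ B : Finset ℕ, B ⊆ Finset.Icc 1 n →
      (∀ p : ℕ, p.Prime → (B.filter (fun a => p ∣ a)).card ≤ k) →
      B.card ≤ A.card)
    (p : ℕ) (hp : p.Prime) (hpn : p ≤ n) :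
    min k (Nat.log p n) ≤ (A.filter (fun a => p ∣ a)).card ∧
    ((A.filter (fun a => p ∣ a)).card < min k (Nat.log p n) →
      ∃ j : ℕ, 1 ≤ j ∧ p ^ j ≤ n ∧ p ^ j ∉ A ∧
        (insert (p ^ j) A ⊆ Finset.Icc 1 n ∧
         (∀ q : ℕ, q.Prime →
           ((insert (p ^ j) A).filter (fun a => q ∣ a)).card ≤ k) ∧
         A.card < (insert (p ^ j) A).card)) := by
  have hp2 : 2 ≤ p := hp.two_le
  set m := Nat.log p n with hm
  have key : (A.filter (fun a => p ∣ a)).card < min k m →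
      ∃ j : ℕ, 1 ≤ j ∧ p ^ j ≤ n ∧ p ^ j ∉ A ∧
        (insert (p ^ j) A ⊆ Finset.Icc 1 n ∧
         (∀ q : ℕ, q.Prime →
           ((insert (p ^ j) A).filter (fun a => q ∣ a)).card ≤ k) ∧
         A.card < (insert (p ^ j) A).card) := by
    intro hlt
    have hltk : (A.filter (fun a => p ∣ a)).card < k :=
      lt_of_lt_of_le hlt (min_le_left _ _)
    have hltm : (A.filter (fun a => p ∣ a)).card < m :=
      lt_of_lt_of_le hlt (min_le_right _ _)
    have hex : ∃ j ∈ Finset.Icc 1 m, p ^ j ∉ A := by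
      by_contra h
      push_neg at h
      have hsub : (Finset.Icc 1 m).image (fun j => p ^ j) ⊆
          A.filter (fun a => p ∣ a) := by
        intro x hx
        simp only [Finset.mem_image] at hx
        obtain ⟨j, hj, rfl⟩ := hx
        have hj1 : 1 ≤ j := (Finset.mem_Icc.mp hj).1
        exact Finset.mem_filter.mpr ⟨h j hj, dvd_pow_self p (by omega)⟩
      have hcard : ((Finset.Icc 1 m).image (fun j => p ^ j)).card = m := by
        rw [Finset.card_image_of_injective _ (Nat.pow_right_injective hp2)]
        simp
      have := Finset.card_le_card hsub
      omega
    obtain ⟨j, hj, hjA⟩ := hex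
    obtain ⟨hj1, hjm⟩ := Finset.mem_Icc.mp hj
    have hpj : p ^ j ≤ n :=
      le_trans (Nat.pow_le_pow_right (by omega) hjm)
        (Nat.pow_log_le_self p (by omega))
    refine ⟨j, hj1, hpj, hjA, ?_, ?_, ?_⟩
    · intro x hx
      rcases Finset.mem_insert.mp hx with rfl | hx
      · exact Finset.mem_Icc.mpr ⟨Nat.one_le_pow _ _ (by omega), hpj⟩
      · exact hA hx
    · intro q hq
      rw [Finset.filter_insert]
      by_cases hqp : q = p
      · subst hqp
        rw [if_pos (dvd_pow_self q (by omega : j ≠ 0))]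
        exact le_trans (Finset.card_insert_le _ _) (by omega)
      · have hnd : ¬ q ∣ p ^ j := fun hd =>
          hqp ((Nat.prime_dvd_prime_iff_eq hq hp).mp (hq.dvd_of_dvd_pow hd))
        rw [if_neg hnd]
        exact hshelf q hq
    · rw [Finset.card_insert_of_notMem hjA]; omega
  constructor
  · by_contra h
    push_neg at h
    obtain ⟨j, _, _, hjA, hsub, hsf, hcard⟩ := key h
    have := hmax _ hsub hsf
    omega
  · exact key
end

section
/- If S ⊆ A is a set of multiples of the prime p with |S| = e and all powers p^j ∈ A with 1 ≤ j ≤ e belong to S, and if every element of {p, p¹, ..., p^e} is at most n, then the set A' := (A \ S) ∪ {p, p², ..., p^e} satisfies o_q(A') ≤ o_q(A) for all primes q ≠ p and o_p(A') ≤ max(o_p(A), e). In particular, if A is an (n,k)-shelf and e ≤ k, then A' is an (n,k)-shelf. -/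
/-- The substitution step of the shifting operation does not increase `o_q` for
primes `q ≠ p`, bounds `o_p` by `max (o_p A) e`, and in particular maps
`(n,k)`-shelves to `(n,k)`-shelves when `e ≤ k`. -/
theorem shifting_step_shelf (n k e : ℕ) (p : ℕ) (hp : p.Prime)
    (A S : Finset ℕ) (hA : A ⊆ Finset.Icc 1 n)
    (hSA : S ⊆ A) (hSmul : ∀ s ∈ S, p ∣ s) (hScard : S.card = e)
    (hpow : ∀ j : ℕ, 1 ≤ j → j ≤ e → p ^ j ∈ A → p ^ j ∈ S)
    (hle : ∀ j : ℕ, 1 ≤ j → j ≤ e → p ^ j ≤ n) :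
    let A' : Finset ℕ := (A \ S) ∪ (Finset.Icc 1 e).image (fun j => p ^ j)
    (∀ q : ℕ, q.Prime → q ≠ p →
      (A'.filter (fun a => q ∣ a)).card ≤ (A.filter (fun a => q ∣ a)).card) ∧
    (A'.filter (fun a => p ∣ a)).card ≤ max (A.filter (fun a => p ∣ a)).card e ∧
    ((∀ q : ℕ, q.Prime → (A.filter (fun a => q ∣ a)).card ≤ k) → e ≤ k →
      A' ⊆ Finset.Icc 1 n ∧
      ∀ q : ℕ, q.Prime → (A'.filter (fun a => q ∣ a)).card ≤ k) := by
  intro A'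
  set P : Finset ℕ := (Finset.Icc 1 e).image (fun j => p ^ j) with hP
  -- elements of P
  have hPmem : ∀ x ∈ P, ∃ j, 1 ≤ j ∧ j ≤ e ∧ x = p ^ j := by
    intro x hx
    simp only [hP, Finset.mem_image, Finset.mem_Icc] at hx
    obtain ⟨j, ⟨h1, h2⟩, rfl⟩ := hx
    exact ⟨j, h1, h2, rfl⟩
  have hPdvd : ∀ x ∈ P, p ∣ x := by
    intro x hx
    obtain ⟨j, h1, _, rfl⟩ := hPmem x hx
    exact dvd_pow_self p (by omega)
  have hPcard : P.card = e := by
    rw [hP, Finset.card_image_of_injective _ (fun a b h => Nat.pow_right_injective hp.two_le h)]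
    simp
  have hdisj : Disjoint (A \ S) P := by
    rw [Finset.disjoint_right]
    intro x hx hx'
    obtain ⟨j, h1, h2, rfl⟩ := hPmem x hx
    rw [Finset.mem_sdiff] at hx'
    exact hx'.2 (hpow j h1 h2 hx'.1)
  -- part 1
  have part1 : ∀ q : ℕ, q.Prime → q ≠ p →
      (A'.filter (fun a => q ∣ a)).card ≤ (A.filter (fun a => q ∣ a)).card := by
    intro q hq hqp
    apply Finset.card_le_card
    intro x hx
    rw [Finset.mem_filter] at hx ⊢
    obtain ⟨hx1, hx2⟩ := hx
    rw [Finset.mem_union] at hx1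
    rcases hx1 with h | h
    · exact ⟨(Finset.mem_sdiff.mp h).1, hx2⟩
    · exfalso
      obtain ⟨j, h1, _, rfl⟩ := hPmem x h
      exact hqp ((Nat.prime_dvd_prime_iff_eq hq hp).mp (hq.dvd_of_dvd_pow hx2))
  have part2 : (A'.filter (fun a => p ∣ a)).card ≤ max (A.filter (fun a => p ∣ a)).card e := by
    have hA'filter : A'.filter (fun a => p ∣ a) =
        ((A \ S).filter (fun a => p ∣ a)) ∪ P := by
      rw [show A' = (A \ S) ∪ P from rfl, Finset.filter_union]
      congr 1
      apply Finset.filter_true_of_mem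
      exact hPdvd
    have hAfilter : A.filter (fun a => p ∣ a) =
        ((A \ S).filter (fun a => p ∣ a)) ∪ S := by
      ext x
      simp only [Finset.mem_filter, Finset.mem_union, Finset.mem_sdiff]
      constructor
      · rintro ⟨hx, hd⟩
        by_cases hxS : x ∈ S
        · exact Or.inr hxS
        · exact Or.inl ⟨⟨hx, hxS⟩, hd⟩
      · rintro (⟨⟨hx, _⟩, hd⟩ | hxS)
        · exact ⟨hx, hd⟩
        · exact ⟨hSA hxS, hSmul x hxS⟩
    have hdisj' : Disjoint ((A \ S).filter (fun a => p ∣ a)) P :=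
      hdisj.mono_left (Finset.filter_subset _ _)
    have hdisj'' : Disjoint ((A \ S).filter (fun a => p ∣ a)) S := by
      rw [Finset.disjoint_right]
      intro x hx hx'
      rw [Finset.mem_filter, Finset.mem_sdiff] at hx'
      exact hx'.1.2 hx
    rw [hA'filter, Finset.card_union_of_disjoint hdisj', hPcard]
    rw [hAfilter, Finset.card_union_of_disjoint hdisj'', hScard]
    exact le_max_left _ _
  refine ⟨part1, part2, ?_⟩
  intro hshelf hek
  constructor
  · intro x hx
    rw [show A' = (A \ S) ∪ P from rfl, Finset.mem_union] at hx
    rcases hx with h | h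
    · exact hA (Finset.mem_sdiff.mp h).1
    · obtain ⟨j, h1, h2, rfl⟩ := hPmem x h
      exact Finset.mem_Icc.mpr ⟨Nat.one_le_pow _ _ hp.pos, hle j h1 h2⟩
  · intro q hq
    by_cases hqp : q = p
    · subst hqp
      exact part2.trans (max_le (hshelf q hq) hek)
    · exact (part1 q hq hqp).trans (hshelf q hq)
end

section
/- Berge's theorem: A matching M in a simple graph G is a maximum matching if and only if G contains no M-augmenting path. -/
set_option linter.unusedSectionVars false
set_option linter.unusedVariables false
set_option maxHeartbeats 800000


variable {V : Type*} [Fintype V] [DecidableEq V]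

/-- `M` is a matching of the simple graph `G`: a set of edges of `G` that are
pairwise vertex-disjoint. -/
def IsMatchingEdges (G : SimpleGraph V) (M : Finset (Sym2 V)) : Prop :=
  ↑M ⊆ G.edgeSet ∧ ∀ e ∈ M, ∀ f ∈ M, e ≠ f → ∀ v : V, v ∈ e → v ∉ f

/-- A vertex is saturated (matched) by `M` if it lies in some edge of `M`. -/
def Saturated (M : Finset (Sym2 V)) (v : V) : Prop := ∃ e ∈ M, v ∈ e

/-- A walk `w` from `u` to `v` is `M`-augmenting: it is a path, both endpoints
are unmatched, and its edges alternate, starting (and hence ending) with an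
edge not in `M`. -/
def IsAugmentingPath (G : SimpleGraph V) (M : Finset (Sym2 V)) {u v : V}
    (w : G.Walk u v) : Prop :=
  w.IsPath ∧ ¬ Saturated M u ∧ ¬ Saturated M v ∧ 0 < w.length ∧
  ∀ (i : ℕ) (h : i < w.edges.length), (w.edges[i] ∈ M ↔ i % 2 = 1)

open SimpleGraph
namespace BergeAux

lemma edges_getElem_eq {G : SimpleGraph V} {u v : V} (w : G.Walk u v) (i : ℕ)
    (h : i < w.edges.length) :
    w.edges[i] = s(w.getVert i, w.getVert (i+1)) := by
  induction w generalizing i with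
  | nil => simp at h
  | @cons a b c hadj p ih =>
    cases i with
    | zero => simp [Walk.getVert]
    | succ n =>
      simp only [Walk.edges_cons, List.getElem_cons_succ, Walk.getVert]
      exact ih n (by simpa using h)

lemma getVert_mem_support {G : SimpleGraph V} {u v : V} (w : G.Walk u v) {t : ℕ}
    (ht : t ≤ w.length) : w.getVert t ∈ w.support :=
  Walk.mem_support_iff_exists_getVert.2 ⟨t, rfl, ht⟩

lemma IsPath.getVert_inj {G : SimpleGraph V} {u v : V} {w : G.Walk u v} (hp : w.IsPath)
    {i j : ℕ} (hi : i ≤ w.length) (hj : j ≤ w.length) (hij : w.getVert i = w.getVert j) :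
    i = j := by
  induction w generalizing i j with
  | nil => simp at hi hj; omega
  | @cons a b c hadj p ih =>
    rw [Walk.cons_isPath_iff] at hp
    match i, j with
    | 0, 0 => rfl
    | 0, j+1 =>
      exfalso
      exact hp.2 (Walk.mem_support_iff_exists_getVert.2 ⟨j, hij.symm, by simpa using hj⟩)
    | i+1, 0 =>
      exfalso
      exact hp.2 (Walk.mem_support_iff_exists_getVert.2 ⟨i, hij, by simpa using hi⟩)
    | i+1, j+1 =>
      have := ih hp.1 (i := i) (j := j) (by simpa using hi) (by simpa using hj) hij
      omega

lemma mem_edge_iff {G : SimpleGraph V} {u v : V} (w : G.Walk u v) {i : ℕ}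
    (h : i < w.edges.length) (x : V) :
    x ∈ w.edges[i] ↔ x = w.getVert i ∨ x = w.getVert (i+1) := by
  rw [edges_getElem_eq w i h, Sym2.mem_iff]

/-- position lemma: if `x = getVert t` lies in edge `i` of a path, then `i = t` or `i+1 = t`. -/
lemma position {G : SimpleGraph V} {u v : V} {w : G.Walk u v} (hp : w.IsPath)
    {i t : ℕ} (h : i < w.edges.length) (ht : t ≤ w.length)
    (hx : w.getVert t ∈ w.edges[i]) : i = t ∨ i + 1 = t := by
  have h' : i < w.length := by simpa using h
  rcases (mem_edge_iff w h _).1 hx with h1 | h1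
  · exact Or.inl (IsPath.getVert_inj hp (by omega) ht h1.symm)
  · exact Or.inr (IsPath.getVert_inj hp (by omega) ht h1.symm)


instance {M : Finset (Sym2 V)} : DecidablePred (Saturated M) := fun v =>
  decidable_of_iff (∃ e ∈ M, v ∈ e) Iff.rfl

lemma card_filter_odd (n : ℕ) :
    ((Finset.range n).filter (fun i => i % 2 = 1)).card = n / 2 := by
  induction n with
  | zero => simp
  | succ m ih =>
    rw [Finset.range_add_one, Finset.filter_insert]
    by_cases h : m % 2 = 1
    · rw [if_pos h, Finset.card_insert_of_notMem (by simp), ih]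
      omega
    · rw [if_neg h, ih]
      omega

lemma card_inter_eq {G : SimpleGraph V} {u x : V} {w : G.Walk u x} (hp : w.IsPath)
    (M : Finset (Sym2 V))
    (halt : ∀ (i : ℕ) (h : i < w.edges.length), (w.edges[i] ∈ M ↔ i % 2 = 1)) :
    (M ∩ w.edges.toFinset).card = w.length / 2 := by
  have hnd : w.edges.Nodup := hp.isTrail.edges_nodup
  rw [← card_filter_odd w.length]
  symm
  apply Finset.card_bij (fun a ha => w.edges[a]'(by
    simp only [Finset.mem_filter, Finset.mem_range] at ha
    simpa using ha.1))
  · intro a ha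
    simp only [Finset.mem_filter, Finset.mem_range] at ha
    have hb : a < w.edges.length := by simpa using ha.1
    exact Finset.mem_inter.2 ⟨(halt a hb).2 ha.2, List.mem_toFinset.2 (List.getElem_mem hb)⟩
  · intro a ha b hb hab
    simp only [Finset.mem_filter, Finset.mem_range] at ha hb
    exact (hnd.getElem_inj_iff).1 hab
  · intro e he
    rcases Finset.mem_inter.1 he with ⟨heM, heW⟩
    rcases List.mem_iff_getElem.1 (List.mem_toFinset.1 heW) with ⟨i, hi, rfl⟩
    exact ⟨i, Finset.mem_filter.2 ⟨Finset.mem_range.2 (by simpa using hi), (halt i hi).1 heM⟩, rfl⟩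

lemma card_saturated {G : SimpleGraph V} {M : Finset (Sym2 V)} (hM : IsMatchingEdges G M) :
    (Finset.univ.filter (fun v : V => Saturated M v)).card = 2 * M.card := by
  have : Finset.univ.filter (fun v : V => Saturated M v)
      = M.biUnion (fun e => Finset.univ.filter (fun v => v ∈ e)) := by
    ext v
    rw [Finset.mem_filter, Finset.mem_biUnion]
    simp [Saturated]
  rw [this, Finset.card_biUnion]
  · rw [Finset.sum_congr rfl (g := fun _ => 2), Finset.sum_const, smul_eq_mul, mul_comm]
    intro e he
    have hne : ¬ e.IsDiag := G.not_isDiag_of_mem_edgeSet (hM.1 he)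
    induction e with
    | h a b =>
      have hab : a ≠ b := by simpa using hne
      have : Finset.univ.filter (fun v => v ∈ s(a, b)) = {a, b} := by
        ext v; simp [Sym2.mem_iff]
      rw [this, Finset.card_insert_of_notMem (by simpa using hab), Finset.card_singleton]
  · intro e he f hf hef
    rw [Function.onFun, Finset.disjoint_left]
    intro v hv hv'
    simp only [Finset.mem_filter] at hv hv'
    exact hM.2 e he f hf hef v hv.2 hv'.2

lemma exists_unsat {G : SimpleGraph V} {M M' : Finset (Sym2 V)} (hM : IsMatchingEdges G M)
    (hM' : IsMatchingEdges G M') (hcard : M.card < M'.card) :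
    ∃ u : V, Saturated M' u ∧ ¬ Saturated M u := by
  by_contra h
  push_neg at h
  have hsub : Finset.univ.filter (fun v : V => Saturated M' v)
      ⊆ Finset.univ.filter (fun v : V => Saturated M v) := by
    intro v hv
    simp only [Finset.mem_filter] at hv ⊢
    exact ⟨hv.1, h v hv.2⟩
  have := Finset.card_le_card hsub
  rw [card_saturated hM, card_saturated hM'] at this
  omega


lemma switch_matching {G : SimpleGraph V} {M : Finset (Sym2 V)} (hM : IsMatchingEdges G M)
    {u x : V} {w : G.Walk u x} (hp : w.IsPath)
    (halt : ∀ (i : ℕ) (h : i < w.edges.length), (w.edges[i] ∈ M ↔ i % 2 = 1))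
    (hu : ¬ Saturated M u)
    (hx : ¬ Saturated M x ∨ w.length % 2 = 0) :
    IsMatchingEdges G ((M \ w.edges.toFinset) ∪ (w.edges.toFinset \ M)) := by
  have hmixed : ∀ e, e ∈ M → e ∉ w.edges.toFinset → ∀ (j : ℕ) (hj : j < w.edges.length),
      w.edges[j] ∉ M → ∀ v, v ∈ e → v ∈ w.edges[j] → False := by
    intro e heM heW j hj hjM v hve hvf
    have hjlen : j < w.length := by simpa using hj
    obtain ⟨t, ht, rfl⟩ : ∃ t, t ≤ w.length ∧ v = w.getVert t := by
      rcases (mem_edge_iff w hj v).1 hvf with h1 | h1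
      · exact ⟨j, by omega, h1⟩
      · exact ⟨j + 1, by omega, h1⟩
    rcases Nat.eq_zero_or_pos t with rfl | htpos
    · rw [Walk.getVert_zero] at hve
      exact hu ⟨e, heM, hve⟩
    rcases eq_or_lt_of_le ht with rfl | htlt
    · rcases hx with hx | hx
      · rw [Walk.getVert_length] at hve
        exact hx ⟨e, heM, hve⟩
      · rcases position hp hj ht hvf with h1 | h1
        · omega
        · exact hjM ((halt j hj).2 (by omega))
    · obtain ⟨j', hj'len, hj'odd, hvj'⟩ :
          ∃ j', ∃ (_ : j' < w.edges.length), j' % 2 = 1 ∧ w.getVert t ∈ w.edges[j'] := by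
        by_cases hpar : t % 2 = 1
        · exact ⟨t, by simpa using htlt, hpar, (mem_edge_iff w (by simpa using htlt) _).2 (Or.inl rfl)⟩
        · have ht1 : t - 1 < w.edges.length := by simp; omega
          refine ⟨t - 1, ht1, by omega, (mem_edge_iff w ht1 _).2 (Or.inr ?_)⟩
          congr 1
          omega
      have hgM : w.edges[j'] ∈ M := (halt j' hj'len).2 hj'odd
      by_cases heg : e = w.edges[j']
      · exact heW (heg ▸ List.mem_toFinset.2 (List.getElem_mem hj'len))
      · exact hM.2 e heM _ hgM heg _ hve hvj'
  constructor
  · intro e he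
    rcases Finset.mem_union.1 he with h | h
    · exact hM.1 (Finset.mem_sdiff.1 h).1
    · exact w.edges_subset_edgeSet (List.mem_toFinset.1 (Finset.mem_sdiff.1 h).1)
  · intro e he f hf hef v hve hvf
    rcases Finset.mem_union.1 he with he | he <;> rcases Finset.mem_union.1 hf with hf | hf <;>
      rw [Finset.mem_sdiff] at he hf
    · exact hM.2 e he.1 f hf.1 hef v hve hvf
    · obtain ⟨j, hj, rfl⟩ := List.mem_iff_getElem.1 (List.mem_toFinset.1 hf.1)
      exact hmixed e he.1 he.2 j hj hf.2 v hve hvf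
    · obtain ⟨j, hj, rfl⟩ := List.mem_iff_getElem.1 (List.mem_toFinset.1 he.1)
      exact hmixed f hf.1 hf.2 j hj he.2 v hvf hve
    · obtain ⟨i, hi, rfl⟩ := List.mem_iff_getElem.1 (List.mem_toFinset.1 he.1)
      obtain ⟨j, hj, rfl⟩ := List.mem_iff_getElem.1 (List.mem_toFinset.1 hf.1)
      obtain ⟨t, ht, hvt⟩ : ∃ t, t ≤ w.length ∧ v = w.getVert t := by
        rcases (mem_edge_iff w hi v).1 hve with h1 | h1
        · exact ⟨i, by simp at hi; omega, h1⟩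
        · exact ⟨i + 1, by simp at hi; omega, h1⟩
      subst hvt
      have hij : i ≠ j := fun h => hef (by simp [h])
      have p1 := position hp hi ht hve
      have p2 := position hp hj ht hvf
      have hiodd : ¬ (i % 2 = 1) := fun h => he.2 ((halt i hi).2 h)
      have hjodd : ¬ (j % 2 = 1) := fun h => hf.2 ((halt j hj).2 h)
      omega

lemma switch_card {G : SimpleGraph V} {M : Finset (Sym2 V)}
    {u x : V} {w : G.Walk u x} (hp : w.IsPath)
    (halt : ∀ (i : ℕ) (h : i < w.edges.length), (w.edges[i] ∈ M ↔ i % 2 = 1)) :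
    ((M \ w.edges.toFinset) ∪ (w.edges.toFinset \ M)).card = M.card + w.length % 2 := by
  have hnd : w.edges.Nodup := hp.isTrail.edges_nodup
  have h1 : (M ∩ w.edges.toFinset).card = w.length / 2 := card_inter_eq hp M halt
  have hWE : w.edges.toFinset.card = w.length := by
    rw [List.toFinset_card_of_nodup hnd]; simp
  have hd : Disjoint (M \ w.edges.toFinset) (w.edges.toFinset \ M) := by
    rw [Finset.disjoint_left]
    intro e h1 h2
    rw [Finset.mem_sdiff] at h1 h2
    exact h2.2 h1.1
  rw [Finset.card_union_of_disjoint hd]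
  have e1 := Finset.card_sdiff_add_card_inter M w.edges.toFinset
  have e2 := Finset.card_sdiff_add_card_inter w.edges.toFinset M
  rw [Finset.inter_comm] at e2
  have h2 : (M ∩ w.edges.toFinset).card ≤ w.length := by
    rw [← hWE]; exact Finset.card_le_card (Finset.inter_subset_right)
  omega


lemma endpoint_mem_last_edge {G : SimpleGraph V} {u x : V} {w : G.Walk u x}
    (hlen : 0 < w.length) (h : w.length - 1 < w.edges.length) :
    x ∈ w.edges[w.length - 1] := by
  refine (mem_edge_iff w h x).2 (Or.inr ?_)
  have : w.length - 1 + 1 = w.length := by omega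
  rw [this, Walk.getVert_length]

/-- if `x` (the endpoint) lies in edge `j` of the path, then `j + 1 = length`. -/
lemma endpoint_position {G : SimpleGraph V} {u x : V} {w : G.Walk u x} (hp : w.IsPath)
    {j : ℕ} (hj : j < w.edges.length) (hx : x ∈ w.edges[j]) : j + 1 = w.length := by
  have := position hp hj (t := w.length) le_rfl (by rwa [Walk.getVert_length])
  have hj' : j < w.length := by simpa using hj
  omega

lemma aug_to_bigger {G : SimpleGraph V} {M : Finset (Sym2 V)} (hM : IsMatchingEdges G M)
    {u v : V} (w : G.Walk u v) (hw : IsAugmentingPath G M w) :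
    ∃ M' : Finset (Sym2 V), IsMatchingEdges G M' ∧ M.card < M'.card := by
  obtain ⟨hp, hu, hv, hlen, halt⟩ := hw
  have hlast : w.length - 1 < w.edges.length := by simp; omega
  have hxlast : v ∈ w.edges[w.length - 1] := endpoint_mem_last_edge hlen hlast
  have hodd : w.length % 2 = 1 := by
    by_contra h
    exact hv ⟨_, (halt _ hlast).2 (by omega), hxlast⟩
  exact ⟨_, switch_matching hM hp halt hu (Or.inl hv), by rw [switch_card hp halt, hodd]; omega⟩

lemma isPath_concat {G : SimpleGraph V} {u x y : V} {w : G.Walk u x} (hp : w.IsPath)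
    (h : G.Adj x y) (hy : y ∉ w.support) : (w.concat h).IsPath := by
  rw [Walk.isPath_def, Walk.support_concat, List.nodup_append]
  exact ⟨hp.support_nodup, List.nodup_singleton y,
    by intro a ha b hb hab; simp at hb; subst hb hab; exact hy ha⟩


lemma internal_edge {G : SimpleGraph V} {u x : V} (w : G.Walk u x) {t : ℕ}
    (ht0 : 0 < t) (htl : t < w.length) (p : ℕ) (hp2 : p < 2) :
    ∃ j', ∃ (_ : j' < w.edges.length), j' % 2 = p ∧ w.getVert t ∈ w.edges[j'] := by
  by_cases hpar : t % 2 = p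
  · exact ⟨t, by simpa using htl, hpar, (mem_edge_iff w (by simpa using htl) _).2 (Or.inl rfl)⟩
  · have ht1 : t - 1 < w.edges.length := by simp; omega
    refine ⟨t - 1, ht1, by omega, (mem_edge_iff w ht1 _).2 (Or.inr ?_)⟩
    congr 1
    omega

/-- The second endpoint of an edge `f ∉ w.edges` of a matching containing the
endpoint `x` of a suitably alternating path is not on the path. -/
lemma other_not_mem_support {G : SimpleGraph V} {M M' : Finset (Sym2 V)}
    (hM : IsMatchingEdges G M) (hM' : IsMatchingEdges G M')
    {u x : V} {w : G.Walk u x} (hp : w.IsPath) (hlen : 0 < w.length)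
    (halt : ∀ (i : ℕ) (h : i < w.edges.length),
      (w.edges[i] ∈ M ↔ i % 2 = 1) ∧ (w.edges[i] ∈ M' ↔ i % 2 = 0))
    (hu : ¬ Saturated M u)
    {f : Sym2 V} (hfW : f ∉ w.edges) (hxf : x ∈ f) (hfMM' : f ∈ M ∨ f ∈ M') :
    Sym2.Mem.other' hxf ∉ w.support := by
  intro hy
  set y := Sym2.Mem.other' hxf with hydef
  have hyf : y ∈ f := Sym2.other_mem' hxf
  have hfG : ¬ f.IsDiag := G.not_isDiag_of_mem_edgeSet
    (hfMM'.elim (fun h => hM.1 h) (fun h => hM'.1 h))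
  obtain ⟨t, hyt, ht⟩ := Walk.mem_support_iff_exists_getVert.1 hy
  rcases eq_or_lt_of_le ht with rfl | htlt
  · -- y = x, so f is a diagonal
    rw [Walk.getVert_length] at hyt
    apply hfG
    rw [← Sym2.other_spec' hxf, ← hydef, ← hyt]
    exact Sym2.mk_isDiag_iff.2 rfl
  rcases Nat.eq_zero_or_pos t with rfl | htpos
  · -- y = u
    rw [Walk.getVert_zero] at hyt
    rcases hfMM' with hfM | hfM'
    · exact hu ⟨f, hfM, hyt ▸ hyf⟩
    · have h0 : 0 < w.edges.length := by simpa using hlen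
      have hg0 : w.edges[0] ∈ M' := ((halt 0 h0).2).mpr rfl
      have hug0 : u ∈ w.edges[0] := by
        rw [mem_edge_iff w h0, Walk.getVert_zero]
        exact Or.inl rfl
      have hne : f ≠ w.edges[0] := fun h => hfW (h ▸ List.getElem_mem h0)
      exact hM'.2 f hfM' _ hg0 hne u (hyt ▸ hyf) hug0
  · -- y internal
    rcases hfMM' with hfM | hfM'
    · obtain ⟨j', hj', hj'par, hyj'⟩ := internal_edge w htpos htlt 1 (by omega)
      have hgM : w.edges[j'] ∈ M := ((halt j' hj').1).mpr hj'par
      have hne : f ≠ w.edges[j'] := fun h => hfW (h ▸ List.getElem_mem hj')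
      exact hM.2 f hfM _ hgM hne y (hydef ▸ hyf) (hyt ▸ hyj')
    · obtain ⟨j', hj', hj'par, hyj'⟩ := internal_edge w htpos htlt 0 (by omega)
      have hgM : w.edges[j'] ∈ M' := ((halt j' hj').2).mpr hj'par
      have hne : f ≠ w.edges[j'] := fun h => hfW (h ▸ List.getElem_mem hj')
      exact hM'.2 f hfM' _ hgM hne y (hydef ▸ hyf) (hyt ▸ hyj')


lemma extend_good {G : SimpleGraph V} {M M' : Finset (Sym2 V)}
    (hM : IsMatchingEdges G M) (hM' : IsMatchingEdges G M')
    {u x : V} {w : G.Walk u x} (hp : w.IsPath) (hlen : 0 < w.length)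
    (halt : ∀ (i : ℕ) (h : i < w.edges.length),
      (w.edges[i] ∈ M ↔ i % 2 = 1) ∧ (w.edges[i] ∈ M' ↔ i % 2 = 0))
    (hu : ¬ Saturated M u)
    (hsat : (w.length % 2 = 1 ∧ Saturated M x) ∨ (w.length % 2 = 0 ∧ Saturated M' x)) :
    ∃ (y : V) (w' : G.Walk u y), w'.IsPath ∧ w'.length = w.length + 1 ∧
      ∀ (i : ℕ) (h : i < w'.edges.length),
        (w'.edges[i] ∈ M ↔ i % 2 = 1) ∧ (w'.edges[i] ∈ M' ↔ i % 2 = 0) := by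
  have hlast : w.length - 1 < w.edges.length := by simp; omega
  have hxlast : x ∈ w.edges[w.length - 1] := endpoint_mem_last_edge hlen hlast
  obtain ⟨f, hpar, hfM, hfM', hxf, hfW⟩ :
      ∃ f : Sym2 V, (f ∈ M ↔ w.length % 2 = 1) ∧ (f ∈ M ∨ f ∈ M') ∧
        (f ∈ M' ↔ w.length % 2 = 0) ∧ ∃ (hxf : x ∈ f), f ∉ w.edges := by
    rcases hsat with ⟨hpar, f, hfM, hxf⟩ | ⟨hpar, f, hfM', hxf⟩
    · have hfW : f ∉ w.edges := by
        intro hmem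
        obtain ⟨j, hj, hfj⟩ := List.mem_iff_getElem.1 hmem
        have hjpos := endpoint_position hp hj (hfj ▸ hxf)
        have : j % 2 = 1 := ((halt j hj).1).mp (by rw [hfj]; exact hfM)
        omega
      have hfM'n : f ∉ M' := by
        intro hfM'
        have hlastM' : w.edges[w.length - 1] ∈ M' := ((halt _ hlast).2).mpr (by omega)
        have hne : f ≠ w.edges[w.length - 1] := fun h => hfW (h ▸ List.getElem_mem hlast)
        exact hM'.2 f hfM' _ hlastM' hne x hxf hxlast
      exact ⟨f, by simp [hfM, hpar], Or.inl hfM, by simp [hfM'n]; omega, hxf, hfW⟩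
    · have hfW : f ∉ w.edges := by
        intro hmem
        obtain ⟨j, hj, hfj⟩ := List.mem_iff_getElem.1 hmem
        have hjpos := endpoint_position hp hj (hfj ▸ hxf)
        have : j % 2 = 0 := ((halt j hj).2).mp (by rw [hfj]; exact hfM')
        omega
      have hfMn : f ∉ M := by
        intro hfM
        have hlastM : w.edges[w.length - 1] ∈ M := ((halt _ hlast).1).mpr (by omega)
        have hne : f ≠ w.edges[w.length - 1] := fun h => hfW (h ▸ List.getElem_mem hlast)
        exact hM.2 f hfM _ hlastM hne x hxf hxlast
      exact ⟨f, by simp [hfMn]; omega, Or.inr hfM', by simp [hfM', hpar], hxf, hfW⟩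
  have hy : Sym2.Mem.other' hxf ∉ w.support :=
    other_not_mem_support hM hM' hp hlen halt hu hfW hxf hfM
  set y := Sym2.Mem.other' hxf with hydef
  have hsxy : s(x, y) = f := Sym2.other_spec' hxf
  have hadj : G.Adj x y := by
    rw [← SimpleGraph.mem_edgeSet, hsxy]
    exact hfM.elim (fun h => hM.1 h) (fun h => hM'.1 h)
  refine ⟨y, w.concat hadj, isPath_concat hp hadj hy, w.length_concat hadj, ?_⟩
  have hedges : (w.concat hadj).edges = w.edges ++ [s(x, y)] := by
    rw [Walk.edges_concat, List.concat_eq_append]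
  intro i hi
  have hilen : i < w.length + 1 := by
    rw [Walk.length_edges, w.length_concat hadj] at hi
    exact hi
  by_cases hicase : i < w.length
  · have : (w.concat hadj).edges[i] = w.edges[i]'(by simpa using hicase) := by
      simp only [hedges]
      exact List.getElem_append_left (by simpa using hicase)
    rw [this]
    exact halt i (by simpa using hicase)
  · have hieq : i = w.length := by omega
    have : (w.concat hadj).edges[i] = s(x, y) := by
      simp only [hedges]
      rw [List.getElem_append_right (by simp; omega)]
      simp [hieq]
    rw [this, hsxy, hieq]
    exact ⟨hpar, hfM'⟩


lemma hard_direction {G : SimpleGraph V} {M : Finset (Sym2 V)} (hM : IsMatchingEdges G M) :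
    ∀ n (M' : Finset (Sym2 V)), IsMatchingEdges G M' → M.card < M'.card → (M' \ M).card = n →
    ∃ (a b : V) (w : G.Walk a b), IsAugmentingPath G M w := by
  intro n
  induction n using Nat.strong_induction_on with
  | _ n ih =>
  intro M' hM' hcard hn
  obtain ⟨u, huM', huM⟩ := exists_unsat hM hM' hcard
  classical
  set P : ℕ → Prop := fun m => ∃ (x : V) (w : G.Walk u x), w.IsPath ∧ w.length = m ∧
    ∀ (i : ℕ) (h : i < w.edges.length),
      (w.edges[i] ∈ M ↔ i % 2 = 1) ∧ (w.edges[i] ∈ M' ↔ i % 2 = 0) with hPdef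
  have hP1 : P 1 := by
    obtain ⟨e0, he0M', hue0⟩ := huM'
    set y0 := Sym2.Mem.other' hue0 with hy0
    have he0 : s(u, y0) = e0 := Sym2.other_spec' hue0
    have hadj0 : G.Adj u y0 := by rw [← SimpleGraph.mem_edgeSet, he0]; exact hM'.1 he0M'
    refine ⟨y0, Walk.cons hadj0 Walk.nil, ?_, rfl, ?_⟩
    · rw [Walk.cons_isPath_iff]
      exact ⟨Walk.IsPath.nil, by simp [hadj0.ne]⟩
    · intro i hi
      have hi0 : i = 0 := by simp at hi; omega
      subst hi0
      have hedge : (Walk.cons hadj0 Walk.nil).edges[0] = e0 := by simp [← he0]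
      rw [hedge]
      exact ⟨⟨fun h => absurd (⟨e0, h, hue0⟩ : Saturated M u) huM, fun h => by simp at h⟩,
        by simp [he0M']⟩
  have hbound : ∀ m, P m → m ≤ Fintype.card V := by
    rintro m ⟨x, w, hp, rfl, -⟩
    exact le_of_lt hp.length_lt
  set n0 := Nat.findGreatest P (Fintype.card V) with hn0
  have hn0ge : 1 ≤ n0 := Nat.le_findGreatest (hbound 1 hP1) hP1
  have hPn0 : P n0 := Nat.findGreatest_of_ne_zero hn0.symm (by omega)
  have hmax : ∀ m, n0 < m → ¬ P m := by
    intro m hm hPm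
    exact Nat.findGreatest_is_greatest (hn0 ▸ hm) (hbound m hPm) hPm
  obtain ⟨x, w, hp, hwlen, halt⟩ := hPn0
  have hlen : 0 < w.length := by omega
  have hnosat : ¬((w.length % 2 = 1 ∧ Saturated M x) ∨ (w.length % 2 = 0 ∧ Saturated M' x)) := by
    intro hsat
    obtain ⟨y, w', hp', hlen', halt'⟩ := extend_good hM hM' hp hlen halt huM hsat
    exact hmax (n0 + 1) (by omega) ⟨y, w', hp', by omega, halt'⟩
  by_cases hpar : w.length % 2 = 1
  · have hxM : ¬ Saturated M x := fun h => hnosat (Or.inl ⟨hpar, h⟩)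
    exact ⟨u, x, w, hp, huM, hxM, hlen, fun i h => (halt i h).1⟩
  · have hpar0 : w.length % 2 = 0 := by omega
    have hxM' : ¬ Saturated M' x := fun h => hnosat (Or.inr ⟨hpar0, h⟩)
    set wr := w.reverse with hwr
    have hpr : wr.IsPath := hp.reverse
    have hlr : wr.length = w.length := w.length_reverse
    have hel : w.edges.length = w.length := w.length_edges
    have hler : wr.edges.length = w.edges.length := by
      rw [hwr, Walk.edges_reverse, List.length_reverse]
    have haltr : ∀ (i : ℕ) (h : i < wr.edges.length), (wr.edges[i] ∈ M' ↔ i % 2 = 1) := by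
      intro i hi
      have hi' : i < w.edges.length := by omega
      have hrev : wr.edges[i] = w.edges[w.edges.length - 1 - i]'(by omega) := by
        simp only [hwr, Walk.edges_reverse]
        exact List.getElem_reverse _
      rw [hrev, (halt _ (by omega)).2]
      omega
    have hM'' := switch_matching hM' hpr haltr hxM' (Or.inr (by omega))
    have hc'' : ((M' \ wr.edges.toFinset) ∪ (wr.edges.toFinset \ M')).card = M'.card := by
      rw [switch_card hpr haltr]
      omega
    have hmemWE : ∀ e : Sym2 V, e ∈ wr.edges.toFinset ↔ e ∈ w.edges := by
      intro e
      rw [List.mem_toFinset, hwr, Walk.edges_reverse, List.mem_reverse]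
    have hss : ((M' \ wr.edges.toFinset) ∪ (wr.edges.toFinset \ M')) \ M ⊂ M' \ M := by
      rw [Finset.ssubset_def]
      constructor
      · intro e he
        rw [Finset.mem_sdiff] at he ⊢
        rcases Finset.mem_union.1 he.1 with h | h
        · exact ⟨(Finset.mem_sdiff.1 h).1, he.2⟩
        · exfalso
          rw [Finset.mem_sdiff] at h
          obtain ⟨j, hj, hej⟩ := List.mem_iff_getElem.1 ((hmemWE e).1 h.1)
          have hjM' : ¬ j % 2 = 0 := fun hh => h.2 (hej ▸ ((halt j hj).2.mpr hh))
          exact he.2 (hej ▸ ((halt j hj).1.mpr (by omega)))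
      · intro hsub
        have h0 : 0 < w.edges.length := by omega
        have hg0M' : w.edges[0] ∈ M' := (halt 0 h0).2.mpr rfl
        have hg0M : w.edges[0] ∉ M := fun h => by have := (halt 0 h0).1.mp h; omega
        have hmem := hsub (Finset.mem_sdiff.2 ⟨hg0M', hg0M⟩)
        rw [Finset.mem_sdiff, Finset.mem_union] at hmem
        rcases hmem.1 with h | h <;> rw [Finset.mem_sdiff] at h
        · exact h.2 ((hmemWE _).2 (List.getElem_mem h0))
        · exact h.2 hg0M'
    exact ih _ (hn ▸ Finset.card_lt_card hss) _ hM'' (hc''.symm ▸ hcard) rfl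

end BergeAux

/-- **Berge's theorem**: a matching `M` of `G` is maximum if and only if `G`
contains no `M`-augmenting path. -/
theorem berge_theorem (G : SimpleGraph V) (M : Finset (Sym2 V))
    (hM : IsMatchingEdges G M) :
    (∀ M' : Finset (Sym2 V), IsMatchingEdges G M' → M'.card ≤ M.card) ↔
    ¬ ∃ (u v : V) (w : G.Walk u v), IsAugmentingPath G M w := by
  constructor
  · rintro hmax ⟨a, b, w, hw⟩
    obtain ⟨M', hM', hlt⟩ := BergeAux.aug_to_bigger hM w hw
    exact absurd (hmax M' hM') (by omega)
  · intro hno M' hM'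
    by_contra h
    push_neg at h
    exact hno (BergeAux.hard_direction hM _ M' hM' h rfl)
end

section
/- Structure of shifted maximum (n,3)-shelves: if A is an (n,3)-shelf such that A contains p, p², p³ for every prime p with p³ ≤ n, contains p, p² for every prime p with p² ≤ n < p³, contains p for every prime p ≤ n, and A has maximal cardinality, then every element a ∈ A with at least two distinct prime divisors is of the form a = p·q with primes p, q satisfying n^{1/3} < p ≤ √n and n^{1/3} < q ≤ n. -/
/-- Structure of shifted maximum `(n,3)`-shelves: in a maximum `(n,3)`-shelf
containing all prime powers `p^i ≤ n` with `i ≤ 3`, every element with at least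
two distinct prime divisors is a product `p·q` of primes with
`n^{1/3} < p ≤ √n` and `n^{1/3} < q ≤ n`. -/
theorem structure_shifted_maximum_shelf_three (n : ℕ) (A : Finset ℕ)
    (hA : A ⊆ Finset.Icc 1 n)
    (hshelf : ∀ p : ℕ, p.Prime → (A.filter (fun a => p ∣ a)).card ≤ 3)
    (hcubes : ∀ p : ℕ, p.Prime → p ^ 3 ≤ n → p ∈ A ∧ p ^ 2 ∈ A ∧ p ^ 3 ∈ A)
    (hsquares : ∀ p : ℕ, p.Prime → p ^ 2 ≤ n → n < p ^ 3 → p ∈ A ∧ p ^ 2 ∈ A)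
    (hprimes : ∀ p : ℕ, p.Prime → p ≤ n → p ∈ A)
    (hmax : ∀ B : Finset ℕ, B ⊆ Finset.Icc 1 n →
      (∀ p : ℕ, p.Prime → (B.filter (fun a => p ∣ a)).card ≤ 3) →
      B.card ≤ A.card) :
    ∀ a ∈ A, 2 ≤ a.primeFactors.card →
      ∃ p q : ℕ, p.Prime ∧ q.Prime ∧ a = p * q ∧
        n < p ^ 3 ∧ p ^ 2 ≤ n ∧ n < q ^ 3 ∧ q ≤ n := by
  intro a ha hcard
  have haIcc := hA ha
  rw [Finset.mem_Icc] at haIcc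
  obtain ⟨ha1, han⟩ := haIcc
  have ha0 : 0 < a := ha1
  -- key: every prime divisor r of a satisfies n < r^3
  have key : ∀ r : ℕ, r.Prime → r ∣ a → n < r ^ 3 := by
    intro r hr hra
    by_contra h
    push_neg at h
    obtain ⟨h1, h2, h3⟩ := hcubes r hr h
    have hr1 : 1 < r := hr.one_lt
    have hane : ∀ k : ℕ, k ≠ 0 → a ≠ r ^ k := by
      intro k hk0 hk
      have : a.primeFactors = {r} := by
        rw [hk, Nat.primeFactors_prime_pow hk0 hr]
      rw [this] at hcard
      simp at hcard
    have hsub : ({r, r ^ 2, r ^ 3, a} : Finset ℕ) ⊆ A.filter (fun x => r ∣ x) := by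
      intro x hx
      simp only [Finset.mem_insert, Finset.mem_singleton] at hx
      rw [Finset.mem_filter]
      rcases hx with rfl | rfl | rfl | rfl
      · exact ⟨h1, dvd_refl _⟩
      · exact ⟨h2, dvd_pow_self _ (by norm_num)⟩
      · exact ⟨h3, dvd_pow_self _ (by norm_num)⟩
      · exact ⟨ha, hra⟩
    have hlt12 : r < r ^ 2 := by nlinarith
    have hlt23 : r ^ 2 < r ^ 3 := by nlinarith
    have hc4 : ({r, r ^ 2, r ^ 3, a} : Finset ℕ).card = 4 := by
      rw [Finset.card_insert_of_notMem (by
          simp only [Finset.mem_insert, Finset.mem_singleton]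
          push_neg
          exact ⟨by omega, by omega, fun h' => (hane 1 one_ne_zero (by simpa using h'.symm))⟩),
        Finset.card_insert_of_notMem (by
          simp only [Finset.mem_insert, Finset.mem_singleton]
          push_neg
          exact ⟨by omega, fun h' => (hane 2 (by norm_num) h'.symm)⟩),
        Finset.card_insert_of_notMem (by
          simp only [Finset.mem_singleton]
          exact fun h' => (hane 3 (by norm_num) h'.symm)),
        Finset.card_singleton]
    have := Finset.card_le_card hsub
    rw [hc4] at this
    have := hshelf r hr
    omega
  -- obtain two distinct prime factors
  obtain ⟨p, hp, q, hq, hpq⟩ := Finset.one_lt_card.mp hcard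
  have hpprime : p.Prime := Nat.prime_of_mem_primeFactors hp
  have hqprime : q.Prime := Nat.prime_of_mem_primeFactors hq
  have hpa : p ∣ a := Nat.dvd_of_mem_primeFactors hp
  have hqa : q ∣ a := Nat.dvd_of_mem_primeFactors hq
  have hpq_dvd : p * q ∣ a :=
    (Nat.Coprime.mul_dvd_of_dvd_of_dvd ((Nat.coprime_primes hpprime hqprime).mpr hpq) hpa hqa)
  obtain ⟨m, hm⟩ := hpq_dvd
  have hnp := key p hpprime hpa
  have hnq := key q hqprime hqa
  have hm0 : m ≠ 0 := by rintro rfl; simp at hm; omega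
  have hm1 : m = 1 := by
    by_contra hm1
    set r := m.minFac with hrdef
    have hrprime : r.Prime := Nat.minFac_prime hm1
    have hrm : r ∣ m := Nat.minFac_dvd m
    have hra : r ∣ a := hm ▸ Dvd.dvd.mul_left hrm _
    have hnr := key r hrprime hra
    have hrle : r ≤ m := Nat.le_of_dvd (Nat.pos_of_ne_zero hm0) hrm
    have hage : p * q * r ≤ a := by
      rw [hm]
      exact Nat.mul_le_mul_left _ hrle
    have h1 : a ^ 3 ≤ n ^ 3 := Nat.pow_le_pow_left han 3
    have h2 : (p * q * r) ^ 3 ≤ a ^ 3 := Nat.pow_le_pow_left hage 3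
    have h3 : n ^ 3 < (p * q * r) ^ 3 := by
      have e1 : (p * q * r) ^ 3 = p ^ 3 * q ^ 3 * r ^ 3 := by ring
      have e2 : n ^ 3 = n * n * n := by ring
      rw [e1, e2]
      exact Nat.mul_lt_mul'' (Nat.mul_lt_mul'' hnp hnq) hnr
    omega
  rw [hm1, mul_one] at hm
  -- wlog p < q
  rcases lt_or_gt_of_ne hpq with hlt | hlt
  · refine ⟨p, q, hpprime, hqprime, hm, hnp, ?_, hnq, ?_⟩
    · have : p ^ 2 < p * q := by nlinarith [hpprime.one_lt]
      omega
    · exact le_trans (Nat.le_of_dvd ha0 hqa) han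
  · refine ⟨q, p, hqprime, hpprime, by rw [hm, mul_comm], hnq, ?_, hnp, ?_⟩
    · have : q ^ 2 < p * q := by nlinarith [hqprime.one_lt]
      omega
    · exact le_trans (Nat.le_of_dvd ha0 hpa) han
end
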